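/- Let q be a probability distribution on [n], let p = U_n, and let k be an integer with 2 ≤ k ≤ n. Then ‖q − p‖²_{[k]} ≥ ‖q − p‖²_{A_k} / (2k)^{7/8}. -/

import Mathlib

open Finset ProbabilityTheory MeasureTheory

/-- The probability mass that a function on `Fin n` assigns to the (0-indexed)
interval `[a, b)`. -/
noncomputable def intervalMass {n : ℕ} (q : Fin n → ℝ) (a b : ℕ) : ℝ :=
  ∑ j ∈ Finset.univ.filter (fun j : Fin n => a ≤ (j : ℕ) ∧ (j : ℕ) < b), q j

/-- `q` is a probability distribution on `[n]` (identified with `Fin n`). -/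
noncomputable def IsDist {n : ℕ} (q : Fin n → ℝ) : Prop := (∀ i, 0 ≤ q i) ∧ ∑ i, q i = 1

/-- The `A_k` distance between `p` and `q` on `Fin n`: the supremum, over all partitions of
`Fin n` into `k` consecutive intervals (described by their monotone sequence of boundary
points), of the sum of the discrepancies `|p(I) - q(I)|` over the intervals. -/
noncomputable def AkDist (n k : ℕ) (p q : Fin n → ℝ) : ℝ :=
  sSup { x : ℝ | ∃ b : Fin (k + 1) → ℕ, Monotone b ∧ b 0 = 0 ∧ b (Fin.last k) = n ∧
    x = ∑ i : Fin k,
      |intervalMass p (b i.castSucc) (b i.succ) - intervalMass q (b i.castSucc) (b i.succ)| }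

/-- The `L1` distance between two functions on `Fin n`. -/
noncomputable def L1Dist {n : ℕ} (p q : Fin n → ℝ) : ℝ := ∑ i, |p i - q i|

/-- The `L2` distance between two functions on `Fin n`. -/
noncomputable def L2Dist {n : ℕ} (p q : Fin n → ℝ) : ℝ := Real.sqrt (∑ i, (p i - q i) ^ 2)

/-- The uniform distribution on `Fin n`. -/
noncomputable def unif (n : ℕ) : Fin n → ℝ := fun _ => 1 / n

/-- The probability that the `m`-fold product measure `q^{⊗m}` assigns to a set
`A ⊆ [n]^m` of sample sequences. -/
noncomputable def prodProb {n m : ℕ} (q : Fin n → ℝ) (A : Finset (Fin m → Fin n)) : ℝ :=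
  ∑ x ∈ A, ∏ j, q (x j)

/-- The reduced distribution of `q` w.r.t. the partition of `Fin n` into `ℓ` consecutive
intervals of equal length `n / ℓ` (assuming `ℓ ∣ n`). -/
noncomputable def reducedDist {n : ℕ} (q : Fin n → ℝ) (ℓ : ℕ) : Fin ℓ → ℝ :=
  fun i => intervalMass q ((i : ℕ) * (n / ℓ)) (((i : ℕ) + 1) * (n / ℓ))

/-- `p` is a `t`-piecewise degree-`d` function on `Fin n`: there is a partition of `Fin n`
into `t` consecutive intervals on each of which `p` agrees with a real polynomial of degree
at most `d`. -/
noncomputable def IsPiecewisePoly {n : ℕ} (t d : ℕ) (p : Fin n → ℝ) : Prop :=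
  ∃ b : Fin (t + 1) → ℕ, Monotone b ∧ b 0 = 0 ∧ b (Fin.last t) = n ∧
    ∀ i : Fin t, ∃ P : Polynomial ℝ, P.degree ≤ (d : ℕ) ∧
      ∀ x : Fin n, b i.castSucc ≤ (x : ℕ) → (x : ℕ) < b i.succ → p x = P.eval ((x : ℕ) : ℝ)

/-- `q` is `k`-flat: there is a partition of `Fin n` into `k` consecutive intervals
on each of which `q` is constant. -/
noncomputable def IsKFlat {n : ℕ} (k : ℕ) (q : Fin n → ℝ) : Prop :=
  ∃ b : Fin (k + 1) → ℕ, Monotone b ∧ b 0 = 0 ∧ b (Fin.last k) = n ∧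
    ∀ i : Fin k, ∃ c : ℝ, ∀ x : Fin n, b i.castSucc ≤ (x : ℕ) → (x : ℕ) < b i.succ → q x = c

/-- The term `Discr(I)² / width(I)^{1/8}` for the interval `I = [a, b)` in `Fin n`, where
the discrepancy is `Discr(I) = |q(I) - U_n(I)|` and the width is `|I|/n` (relative to the
uniform distribution `U_n`). -/
noncomputable def ssTerm {n : ℕ} (q : Fin n → ℝ) (a b : ℕ) : ℝ :=
  |intervalMass q a b - ((b - a : ℕ) : ℝ) / n| ^ 2 / (((b - a : ℕ) : ℝ) / n) ^ ((1 : ℝ) / 8)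

/-- The squared scale-sensitive-`L2` distance between `q` and the uniform distribution
on `Fin n`, at scale `1/k`: the supremum, over all partitions of `Fin n` into consecutive
nonempty intervals each of width at most `1/k`, of `∑ Discr(I)² / width(I)^{1/8}`. -/
noncomputable def ssDistSq (n k : ℕ) (q : Fin n → ℝ) : ℝ :=
  sSup { x : ℝ | ∃ r : ℕ, ∃ b : Fin (r + 1) → ℕ, StrictMono b ∧ b 0 = 0 ∧ b (Fin.last r) = n ∧
    (∀ i : Fin r, ((b i.succ - b i.castSucc : ℕ) : ℝ) / n ≤ 1 / k) ∧
    x = ∑ i : Fin r, ssTerm q (b i.castSucc) (b i.succ) }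
namespace SSAkAux

open Finset

variable {n : ℕ}

noncomputable def Qf {n : ℕ} (q : Fin n → ℝ) (j : ℕ) : ℝ := if h : j < n then q ⟨j, h⟩ else 0

lemma Qf_nonneg {q : Fin n → ℝ} (hq : ∀ i, 0 ≤ q i) (j : ℕ) : 0 ≤ Qf q j := by
  unfold Qf; split <;> simp [hq]

lemma intervalMass_eq_sum (q : Fin n → ℝ) (a b : ℕ) :
    intervalMass q a b = ∑ j ∈ Finset.Ico a b, Qf q j := by
  have h1 : intervalMass q a b
      = ∑ m ∈ Finset.range n, (if a ≤ m ∧ m < b then Qf q m else 0) := by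
    rw [intervalMass, Finset.sum_filter,
      ← Fin.sum_univ_eq_sum_range (fun m => if a ≤ m ∧ m < b then Qf q m else 0) n]
    refine Finset.sum_congr rfl (fun j _ => ?_)
    by_cases hj : a ≤ (j : ℕ) ∧ (j : ℕ) < b
    · simp only [hj, if_true, Qf, j.isLt, dif_pos]
    · simp [hj]
  rw [h1, ← Finset.sum_filter]
  rw [show Finset.filter (fun m => a ≤ m ∧ m < b) (Finset.range n)
      = Finset.filter (fun m => m < n) (Finset.Ico a b) from by
    ext j; simp [Finset.mem_Ico]; tauto]
  refine Finset.sum_subset (Finset.filter_subset _ _) (fun j hj hnj => ?_)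
  have hn' : ¬ j < n := fun h => hnj (Finset.mem_filter.2 ⟨hj, h⟩)
  exact dif_neg hn'

lemma intervalMass_total (q : Fin n → ℝ) : intervalMass q 0 n = ∑ i, q i := by
  rw [intervalMass]
  congr 1
  apply Finset.filter_true_of_mem
  exact fun j _ => ⟨Nat.zero_le _, j.isLt⟩

lemma intervalMass_nonneg {q : Fin n → ℝ} (hq : ∀ i, 0 ≤ q i) (a b : ℕ) :
    0 ≤ intervalMass q a b := by
  rw [intervalMass_eq_sum]
  exact Finset.sum_nonneg fun j _ => Qf_nonneg hq j

lemma intervalMass_unif {a b : ℕ} (hbn : b ≤ n) :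
    intervalMass (unif n) a b = ((b - a : ℕ) : ℝ) / n := by
  rcases le_or_gt a b with hab | hab
  · rw [intervalMass_eq_sum]
    have : ∀ j ∈ Finset.Ico a b, Qf (unif n) j = 1 / n := fun j hj => by
      unfold Qf
      rw [dif_pos (lt_of_lt_of_le (Finset.mem_Ico.1 hj).2 hbn)]
      rfl
    rw [Finset.sum_congr rfl this, Finset.sum_const, Nat.card_Ico, nsmul_eq_mul, mul_one_div]
  · have he : Finset.Ico a b = ∅ := Finset.Ico_eq_empty (by omega)
    rw [intervalMass_eq_sum, he, Finset.sum_empty, Nat.sub_eq_zero_of_le hab.le]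
    simp

lemma sum_Ico_Ico {M : Type*} [AddCommMonoid M] (f : ℕ → M) {g : ℕ → ℕ} (hg : Monotone g)
    {u v : ℕ} (huv : u ≤ v) :
    ∑ l ∈ Finset.Ico u v, (∑ j ∈ Finset.Ico (g l) (g (l + 1)), f j)
      = ∑ j ∈ Finset.Ico (g u) (g v), f j := by
  induction v, huv using Nat.le_induction with
  | base => simp
  | succ v huv ih =>
      rw [Finset.sum_Ico_succ_top huv, ih,
        Finset.sum_Ico_consecutive _ (hg (by omega)) (hg (by omega))]

def clampF (t : ℕ) (b : Fin (t + 1) → ℕ) (i : ℕ) : ℕ := b ⟨min i t, by omega⟩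

lemma clampF_mono {t : ℕ} {b : Fin (t + 1) → ℕ} (hb : Monotone b) : Monotone (clampF t b) :=
  fun i j h => hb (by simp [Fin.mk_le_mk]; omega)

lemma clampF_castSucc {t : ℕ} (b : Fin (t + 1) → ℕ) (i : Fin t) :
    clampF t b (i : ℕ) = b i.castSucc :=
  congrArg b (by ext; simp)

lemma clampF_succ {t : ℕ} (b : Fin (t + 1) → ℕ) (i : Fin t) :
    clampF t b ((i : ℕ) + 1) = b i.succ :=
  congrArg b (by ext; simp)

lemma clampF_val {t : ℕ} (b : Fin (t + 1) → ℕ) (j : Fin (t + 1)) :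
    clampF t b (j : ℕ) = b j :=
  congrArg b (by ext; simp [Nat.min_eq_left (Nat.lt_succ_iff.1 j.isLt)])

lemma clampF_zero {t : ℕ} (b : Fin (t + 1) → ℕ) : clampF t b 0 = b 0 :=
  congrArg b (by ext; simp)

lemma clampF_top {t : ℕ} (b : Fin (t + 1) → ℕ) : clampF t b t = b (Fin.last t) :=
  congrArg b (by ext; simp [Fin.last])

lemma fin_sum_to_range {M : Type*} [AddCommMonoid M] {t : ℕ} (b : Fin (t + 1) → ℕ)
    (F : ℕ → ℕ → M) :
    ∑ i : Fin t, F (b i.castSucc) (b i.succ)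
      = ∑ i ∈ Finset.range t, F (clampF t b i) (clampF t b (i + 1)) := by
  rw [← Fin.sum_univ_eq_sum_range (fun i => F (clampF t b i) (clampF t b (i + 1))) t]
  exact Finset.sum_congr rfl fun i _ => by rw [clampF_castSucc, clampF_succ]

lemma partition_total {M : Type*} [AddCommMonoid M] {t n' : ℕ} {b : Fin (t + 1) → ℕ}
    (hb : Monotone b) (h0 : b 0 = 0) (hl : b (Fin.last t) = n') (f : ℕ → M) :
    ∑ i : Fin t, (∑ j ∈ Finset.Ico (b i.castSucc) (b i.succ), f j)
      = ∑ j ∈ Finset.Ico 0 n', f j := by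
  rw [fin_sum_to_range b (fun x y => ∑ j ∈ Finset.Ico x y, f j), Finset.range_eq_Ico,
    sum_Ico_Ico f (clampF_mono hb) (Nat.zero_le t), clampF_zero, clampF_top, h0, hl]

lemma sum_mass {t : ℕ} {b : Fin (t + 1) → ℕ} (hb : Monotone b) (h0 : b 0 = 0)
    (hl : b (Fin.last t) = n) (q : Fin n → ℝ) :
    ∑ i : Fin t, intervalMass q (b i.castSucc) (b i.succ) = ∑ i, q i := by
  calc ∑ i : Fin t, intervalMass q (b i.castSucc) (b i.succ)
      = ∑ i : Fin t, ∑ j ∈ Finset.Ico (b i.castSucc) (b i.succ), Qf q j :=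
        Finset.sum_congr rfl fun i _ => intervalMass_eq_sum q _ _
    _ = ∑ j ∈ Finset.Ico 0 n, Qf q j := partition_total hb h0 hl _
    _ = intervalMass q 0 n := (intervalMass_eq_sum q 0 n).symm
    _ = ∑ i, q i := intervalMass_total q

lemma sum_width {t : ℕ} {b : Fin (t + 1) → ℕ} (hn : 0 < n) (hb : Monotone b) (h0 : b 0 = 0)
    (hl : b (Fin.last t) = n) :
    ∑ i : Fin t, ((b i.succ - b i.castSucc : ℕ) : ℝ) / n = 1 := by
  have h1 : ∀ i : Fin t, ((b i.succ - b i.castSucc : ℕ) : ℝ) / n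
      = intervalMass (unif n) (b i.castSucc) (b i.succ) := by
    intro i
    rw [intervalMass_unif (hl ▸ hb (Fin.le_last i.succ))]
  rw [Finset.sum_congr rfl fun i _ => h1 i, sum_mass hb h0 hl]
  unfold unif
  rw [Finset.sum_const, Finset.card_univ, Fintype.card_fin, nsmul_eq_mul, mul_one_div,
    div_self (by positivity)]

lemma exists_interval {t : ℕ} {b : Fin (t + 1) → ℕ} (hb : Monotone b) (h0 : b 0 = 0) {x : ℕ}
    (hx : x < b (Fin.last t)) : ∃ i : Fin t, b i.castSucc ≤ x ∧ x < b i.succ := by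
  classical
  have hex : ∃ j, x < clampF t b j := ⟨t, by rwa [clampF_top]⟩
  set j := Nat.find hex with hjdef
  have hj : x < clampF t b j := Nat.find_spec hex
  have hj0 : j ≠ 0 := by
    intro h
    rw [h, clampF_zero, h0] at hj
    omega
  have hjt : j ≤ t := by
    by_contra h
    exact Nat.find_min hex (show t < j by omega) (by rwa [clampF_top])
  have ht0 : 0 < t := by omega
  refine ⟨⟨j - 1, by omega⟩, ?_, ?_⟩
  · have hmin : ¬ x < clampF t b (j - 1) := Nat.find_min hex (m := j - 1) (by omega)
    have he : b ((⟨j - 1, by omega⟩ : Fin t).castSucc) = clampF t b (j - 1) := by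
      unfold clampF
      apply congrArg b
      apply Fin.ext
      simp
      omega
    rw [he]
    omega
  · have he : b ((⟨j - 1, by omega⟩ : Fin t).succ) = clampF t b j := by
      unfold clampF
      apply congrArg b
      apply Fin.ext
      simp
      omega
    rw [he]
    exact hj

lemma sum_Ico_nat_sub {g : ℕ → ℕ} (hg : Monotone g) {u v : ℕ} (huv : u ≤ v) :
    ∑ l ∈ Finset.Ico u v, (g (l + 1) - g l) = g v - g u := by
  induction v, huv using Nat.le_induction with
  | base => simp
  | succ v huv ih =>
      rw [Finset.sum_Ico_succ_top huv, ih]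
      have h1 := hg huv
      have h2 : g v ≤ g (v + 1) := hg (by omega)
      omega

end SSAkAux

set_option maxHeartbeats 2000000 in
open SSAkAux in
/-- **Lemma: the scale-sensitive-`L2` distance dominates the `A_k` distance:**
`‖q - U_n‖²_{[k]} ≥ ‖q - U_n‖²_{A_k} / (2k)^{7/8}`. -/
theorem scale_sensitive_ge_Ak (n k : ℕ) (hk2 : 2 ≤ k) (hkn : k ≤ n)
    (q : Fin n → ℝ) (hq : IsDist q) :
    AkDist n k q (unif n) ^ 2 / (2 * (k : ℝ)) ^ ((7 : ℝ) / 8) ≤ ssDistSq n k q := by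
  classical
  obtain ⟨hq0, hq1⟩ := hq
  have hn : 0 < n := by omega
  have hk0 : 0 < k := by omega
  have hC : (0:ℝ) < (2 * (k : ℝ)) ^ ((7 : ℝ) / 8) :=
    Real.rpow_pos_of_pos (by positivity) _
  -- the set appearing in `ssDistSq` is bounded above
  have hBdd : BddAbove { x : ℝ | ∃ r : ℕ, ∃ b : Fin (r + 1) → ℕ, StrictMono b ∧ b 0 = 0 ∧
      b (Fin.last r) = n ∧
      (∀ i : Fin r, ((b i.succ - b i.castSucc : ℕ) : ℝ) / n ≤ 1 / k) ∧
      x = ∑ i : Fin r, ssTerm q (b i.castSucc) (b i.succ) } := by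
    refine ⟨4 / ((1:ℝ)/n) ^ ((1:ℝ)/8), ?_⟩
    rintro x ⟨r, c, hcs, hc0, hcl, -, rfl⟩
    have hM0 : ∀ i : Fin r, 0 ≤ intervalMass q (c i.castSucc) (c i.succ) :=
      fun i => intervalMass_nonneg hq0 _ _
    have hwpos : ∀ i : Fin r, (0:ℝ) < ((c i.succ - c i.castSucc : ℕ) : ℝ) / n := by
      intro i
      have h2 : (0:ℝ) < ((c i.succ - c i.castSucc : ℕ) : ℝ) := by
        exact_mod_cast Nat.sub_pos_of_lt (hcs (Fin.castSucc_lt_succ (i := i)))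
      positivity
    have hsumM : ∑ i : Fin r, intervalMass q (c i.castSucc) (c i.succ) = 1 := by
      rw [sum_mass hcs.monotone hc0 hcl q, hq1]
    have hsumw : ∑ i : Fin r, ((c i.succ - c i.castSucc : ℕ) : ℝ) / n = 1 :=
      sum_width hn hcs.monotone hc0 hcl
    have hterm : ∀ i : Fin r, ssTerm q (c i.castSucc) (c i.succ)
        ≤ (intervalMass q (c i.castSucc) (c i.succ) + ((c i.succ - c i.castSucc : ℕ) : ℝ) / n) ^ 2
          / ((1:ℝ)/n) ^ ((1:ℝ)/8) := by
      intro i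
      unfold ssTerm
      refine div_le_div₀ (by positivity) ?_ (by positivity) ?_
      · refine pow_le_pow_left₀ (abs_nonneg _) ?_ 2
        exact abs_le.2 ⟨by nlinarith [hM0 i, (hwpos i).le], by nlinarith [hM0 i, (hwpos i).le]⟩
      · refine Real.rpow_le_rpow (by positivity) ?_ (by norm_num)
        have h2 : (1:ℝ) ≤ ((c i.succ - c i.castSucc : ℕ) : ℝ) := by
          exact_mod_cast Nat.sub_pos_of_lt (hcs (Fin.castSucc_lt_succ (i := i)))
        gcongr
    calc ∑ i : Fin r, ssTerm q (c i.castSucc) (c i.succ)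
        ≤ ∑ i : Fin r, (intervalMass q (c i.castSucc) (c i.succ)
            + ((c i.succ - c i.castSucc : ℕ) : ℝ) / n) ^ 2 / ((1:ℝ)/n) ^ ((1:ℝ)/8) :=
          Finset.sum_le_sum fun i _ => hterm i
      _ = (∑ i : Fin r, (intervalMass q (c i.castSucc) (c i.succ)
            + ((c i.succ - c i.castSucc : ℕ) : ℝ) / n) ^ 2) / ((1:ℝ)/n) ^ ((1:ℝ)/8) := by
          rw [Finset.sum_div]
      _ ≤ ((∑ i : Fin r, (intervalMass q (c i.castSucc) (c i.succ)
            + ((c i.succ - c i.castSucc : ℕ) : ℝ) / n)) ^ 2) / ((1:ℝ)/n) ^ ((1:ℝ)/8) := by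
          gcongr
          exact Finset.sum_sq_le_sq_sum_of_nonneg fun i _ => add_nonneg (hM0 i) (hwpos i).le
      _ = 4 / ((1:ℝ)/n) ^ ((1:ℝ)/8) := by
          rw [Finset.sum_add_distrib, hsumM, hsumw]
          norm_num
  -- main claim : every element of the `A_k` set is at most `√(C * T)`
  have key : ∀ x ∈ { x : ℝ | ∃ b : Fin (k + 1) → ℕ, Monotone b ∧ b 0 = 0 ∧
      b (Fin.last k) = n ∧ x = ∑ i : Fin k,
        |intervalMass q (b i.castSucc) (b i.succ) - intervalMass (unif n) (b i.castSucc) (b i.succ)| },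
      x ≤ Real.sqrt ((2 * (k : ℝ)) ^ ((7 : ℝ) / 8) * ssDistSq n k q) := by
    rintro x ⟨b, hb, h0, hl, rfl⟩
    set m := n / k with hmdef
    have hm1 : 1 ≤ m := (Nat.one_le_div_iff hk0).2 hkn
    have hkm : k * m ≤ n := by
      rw [hmdef, mul_comm]
      exact Nat.div_mul_le_self n k
    have hmod : k * m + n % k = n := by rw [hmdef]; exact Nat.div_add_mod n k
    have hmodlt : n % k < k := Nat.mod_lt n hk0
    have hbub : ∀ j, b j ≤ n := fun j => hl ▸ hb (Fin.le_last j)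
    set S : Finset ℕ := (Finset.range (n+1)).filter
      (fun x => x = n ∨ ∃ i : Fin k, b i.castSucc ≤ x ∧ x < b i.succ ∧ m ∣ (x - b i.castSucc))
      with hSdef
    have hnS : n ∈ S := Finset.mem_filter.2 ⟨Finset.self_mem_range_succ n, Or.inl rfl⟩
    have hmemb : ∀ i : Fin (k+1), b i ∈ S := by
      intro i
      rcases eq_or_lt_of_le (hbub i) with heq | hlt
      · rw [heq]; exact hnS
      · obtain ⟨i', h1, h2⟩ := exists_interval hb h0 (by rw [hl]; exact hlt)
        have heq2 : b i'.castSucc = b i := by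
          rcases le_or_gt i i'.castSucc with h | h
          · exact le_antisymm h1 (hb h)
          · have hsle : i'.succ ≤ i := Fin.castSucc_lt_iff_succ_le.1 h
            have := hb hsle
            omega
        exact Finset.mem_filter.2 ⟨Finset.mem_range.2 (by omega),
          Or.inr ⟨i', h1, h2, by rw [heq2]; simp⟩⟩
    have hgap : ∀ x ∈ S, x < n → ∃ y ∈ S, x < y ∧ y ≤ x + m := by
      intro x hxS hxn
      obtain ⟨-, hP⟩ := Finset.mem_filter.1 hxS
      rcases hP with rfl | ⟨i, h1, h2, h3⟩
      · omega
      by_cases hcase : x + m < b i.succ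
      · refine ⟨x + m, Finset.mem_filter.2 ⟨Finset.mem_range.2 ?_,
          Or.inr ⟨i, by omega, hcase, ?_⟩⟩, by omega, le_refl _⟩
        · have := hbub i.succ; omega
        · obtain ⟨c0, hc⟩ := h3
          refine ⟨c0 + 1, ?_⟩
          have hmc : m * (c0 + 1) = m * c0 + m := by ring
          omega
      · exact ⟨b i.succ, hmemb i.succ, h2, by omega⟩
    -- total length of all the intervals
    have hble : ∀ i : Fin k, b i.castSucc ≤ b i.succ := fun i => hb (Fin.castSucc_le_succ i)
    have hsumL : ∑ i : Fin k, (b i.succ - b i.castSucc) = n := by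
      rw [fin_sum_to_range b (fun u v => v - u), Finset.range_eq_Ico,
        sum_Ico_nat_sub (clampF_mono hb) (Nat.zero_le k), clampF_zero, clampF_top, h0, hl]
      omega
    -- bound on the number of pieces in each interval
    have hsumt : (∑ i : Fin k, (b i.succ - b i.castSucc + m - 1) / m) ≤ 2 * k - 1 := by
      have h1 : (∑ i : Fin k, (b i.succ - b i.castSucc + m - 1) / m) * m
          ≤ ∑ i : Fin k, (b i.succ - b i.castSucc + m - 1) := by
        rw [Finset.sum_mul]
        exact Finset.sum_le_sum fun i _ => Nat.div_mul_le_self _ _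
      have h2 : ∑ i : Fin k, (b i.succ - b i.castSucc + m - 1)
          = n + k * (m - 1) := by
        calc ∑ i : Fin k, (b i.succ - b i.castSucc + m - 1)
            = ∑ i : Fin k, ((b i.succ - b i.castSucc) + (m - 1)) :=
              Finset.sum_congr rfl fun i _ => by omega
          _ = (∑ i : Fin k, (b i.succ - b i.castSucc)) + k * (m - 1) := by
              rw [Finset.sum_add_distrib, Finset.sum_const, Finset.card_univ,
                Fintype.card_fin, smul_eq_mul]
          _ = n + k * (m - 1) := by rw [hsumL]
      have hks : k * (m - 1) + k = k * m := by
        rw [← Nat.mul_succ]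
        congr 1
        omega
      by_contra hcon
      push_neg at hcon
      have h3 : 2 * k ≤ ∑ i : Fin k, (b i.succ - b i.castSucc + m - 1) / m := by omega
      have h4 : 2 * k * m ≤ (∑ i : Fin k, (b i.succ - b i.castSucc + m - 1) / m) * m :=
        Nat.mul_le_mul_right m h3
      have h5 : 2 * k * m = k * m + k * m := by ring
      omega
    -- cardinality of the cut set
    have hScard : S.card ≤ 2 * k := by
      have hsub : S ⊆ insert n (Finset.univ.biUnion (fun i : Fin k =>
          (Finset.range ((b i.succ - b i.castSucc + m - 1) / m)).image
            (fun j => b i.castSucc + j * m))) := by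
        intro x hx
        obtain ⟨-, hP⟩ := Finset.mem_filter.1 hx
        rcases hP with rfl | ⟨i, h1, h2, h3⟩
        · exact Finset.mem_insert_self _ _
        · obtain ⟨c0, hc⟩ := h3
          refine Finset.mem_insert_of_mem (Finset.mem_biUnion.2 ⟨i, Finset.mem_univ _,
            Finset.mem_image.2 ⟨c0, Finset.mem_range.2 ?_, ?_⟩⟩)
          · rw [Nat.lt_iff_add_one_le, Nat.le_div_iff_mul_le hm1]
            have hmc : (c0 + 1) * m = m * c0 + m := by ring
            omega
          · have hmc : c0 * m = m * c0 := by ring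
            omega
      calc S.card ≤ _ := Finset.card_le_card hsub
        _ ≤ (Finset.univ.biUnion (fun i : Fin k =>
              (Finset.range ((b i.succ - b i.castSucc + m - 1) / m)).image
                (fun j => b i.castSucc + j * m))).card + 1 := Finset.card_insert_le _ _
        _ ≤ (∑ i : Fin k, ((Finset.range ((b i.succ - b i.castSucc + m - 1) / m)).image
                (fun j => b i.castSucc + j * m)).card) + 1 := by
            have := Finset.card_biUnion_le (s := (Finset.univ : Finset (Fin k)))
              (t := fun i : Fin k => (Finset.range ((b i.succ - b i.castSucc + m - 1) / m)).image
                (fun j => b i.castSucc + j * m))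
            omega
        _ ≤ (∑ i : Fin k, (b i.succ - b i.castSucc + m - 1) / m) + 1 := by
            have : ∀ i : Fin k, ((Finset.range ((b i.succ - b i.castSucc + m - 1) / m)).image
                (fun j => b i.castSucc + j * m)).card ≤ (b i.succ - b i.castSucc + m - 1) / m :=
              fun i => le_trans (Finset.card_image_le) (by rw [Finset.card_range])
            have := Finset.sum_le_sum (fun i (_ : i ∈ Finset.univ) => this i)
            omega
        _ ≤ 2 * k := by omega
    -- the refined partition, as an order embedding of `Fin (r+1)`
    have hSne : 0 < S.card := Finset.card_pos.2 ⟨n, hnS⟩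
    have hSub : ∀ y ∈ S, y ≤ n := fun y hy => by
      have := Finset.mem_range.1 (Finset.mem_filter.1 hy).1; omega
    obtain ⟨r, hr⟩ : ∃ r : ℕ, S.card = r + 1 := ⟨S.card - 1, by omega⟩
    have hrS : r + 1 = S.card := hr.symm
    obtain ⟨c, hcmono, hcmem, hsurj, hc0, hclast⟩ :
        ∃ c : Fin (r+1) → ℕ, StrictMono c ∧ (∀ j, c j ∈ S) ∧ (∀ y ∈ S, ∃ j, c j = y) ∧
          c 0 = 0 ∧ c (Fin.last r) = n := by
      refine ⟨fun j => S.orderEmbOfFin hr j, (S.orderEmbOfFin hr).strictMono,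
        fun j => Finset.orderEmbOfFin_mem S hr j, ?_, ?_, ?_⟩
      · intro y hy
        have hy' : y ∈ Set.range (S.orderEmbOfFin hr) := by
          rw [Finset.range_orderEmbOfFin]
          exact hy
        obtain ⟨j, hj⟩ := hy'
        exact ⟨j, hj⟩
      · have h00 : (0:ℕ) ∈ S := by have := hmemb 0; rwa [h0] at this
        have he : S.orderEmbOfFin hr (0 : Fin (r+1)) = S.min' ⟨n, hnS⟩ := by
          rw [show (0 : Fin (r+1)) = ⟨0, Nat.succ_pos r⟩ from rfl]
          exact Finset.orderEmbOfFin_zero hr (Nat.succ_pos r)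
        show S.orderEmbOfFin hr 0 = 0
        rw [he]
        exact le_antisymm (Finset.min'_le _ _ h00) (Nat.zero_le _)
      · have he : S.orderEmbOfFin hr (Fin.last r) = S.max' ⟨n, hnS⟩ := by
          rw [show (Fin.last r) = ⟨(r+1) - 1, Nat.sub_lt (Nat.succ_pos r) Nat.one_pos⟩ from rfl]
          exact Finset.orderEmbOfFin_last hr (Nat.succ_pos r)
        show S.orderEmbOfFin hr (Fin.last r) = n
        rw [he]
        exact le_antisymm (Finset.max'_le _ _ _ hSub) (Finset.le_max' _ _ hnS)
    clear hr
    have hcub : ∀ j, c j ≤ n := fun j => hSub _ (hcmem j)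
    have hwidth : ∀ j : Fin r, c j.succ ≤ c j.castSucc + m := by
      intro j
      have h2 : c j.castSucc < n := by
        rw [← hclast]
        exact hcmono (Fin.castSucc_lt_last j)
      obtain ⟨y, hyS, hxy, hym⟩ := hgap _ (hcmem j.castSucc) h2
      obtain ⟨l, rfl⟩ := hsurj y hyS
      have hjl : j.succ ≤ l := Fin.castSucc_lt_iff_succ_le.1 (hcmono.lt_iff_lt.1 hxy)
      exact le_trans (hcmono.monotone hjl) hym
    have hclt : ∀ l : Fin r, c l.castSucc < c l.succ := fun l => hcmono (Fin.castSucc_lt_succ (i := l))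
    -- real widths
    have hWpos : ∀ l : Fin r, (0:ℝ) < ((c l.succ - c l.castSucc : ℕ) : ℝ) / n := by
      intro l
      have h2 : (0:ℝ) < ((c l.succ - c l.castSucc : ℕ) : ℝ) := by
        exact_mod_cast Nat.sub_pos_of_lt (hclt l)
      positivity
    have hWk : ∀ l : Fin r, ((c l.succ - c l.castSucc : ℕ) : ℝ) / n ≤ 1 / (k:ℝ) := by
      intro l
      have hLk : (c l.succ - c l.castSucc) * k ≤ n := by
        have h1 := hwidth l
        have h2 : (c l.succ - c l.castSucc) * k ≤ m * k := Nat.mul_le_mul_right k (by omega)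
        have h3 : m * k = k * m := by ring
        omega
      rw [div_le_div_iff₀ (by positivity) (by positivity), one_mul]
      exact_mod_cast hLk
    -- index map sending the original partition into the refinement
    have hGex : ∀ i : Fin (k+1), ∃ j, c j = b i := fun i => hsurj _ (hmemb i)
    choose G hG using hGex
    have hGmono : Monotone G := fun i i' h => hcmono.le_iff_le.1 (by rw [hG, hG]; exact hb h)
    have hG0 : G 0 = 0 := hcmono.injective (by rw [hG, h0, hc0])
    have hGlast : G (Fin.last k) = Fin.last r := hcmono.injective (by rw [hG, hl, hclast])
    -- discrepancy over an interval as a sum over `Ico`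
    have habs : ∀ a bb : ℕ, |intervalMass q a bb - intervalMass (unif n) a bb|
        = |∑ j ∈ Finset.Ico a bb, (Qf q j - Qf (unif n) j)| := by
      intro a bb
      rw [intervalMass_eq_sum, intervalMass_eq_sum, ← Finset.sum_sub_distrib]
    -- refinement only increases the total discrepancy
    have step1 : (∑ i : Fin k, |intervalMass q (b i.castSucc) (b i.succ)
          - intervalMass (unif n) (b i.castSucc) (b i.succ)|)
        ≤ ∑ l : Fin r, |∑ j ∈ Finset.Ico (c l.castSucc) (c l.succ), (Qf q j - Qf (unif n) j)| := by
      have hGvmono : Monotone (fun i : Fin (k+1) => (G i : ℕ)) := fun i i' h => hGmono h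
      have e1 : ∀ i : Fin k, |intervalMass q (b i.castSucc) (b i.succ)
            - intervalMass (unif n) (b i.castSucc) (b i.succ)|
          = |∑ l ∈ Finset.Ico ((G i.castSucc : ℕ)) ((G i.succ : ℕ)),
              ∑ j ∈ Finset.Ico (clampF r c l) (clampF r c (l+1)), (Qf q j - Qf (unif n) j)| := by
        intro i
        rw [habs]
        congr 1
        rw [sum_Ico_Ico (fun j => Qf q j - Qf (unif n) j) (clampF_mono hcmono.monotone)
          (hGvmono (Fin.castSucc_le_succ i) : (G i.castSucc : ℕ) ≤ (G i.succ : ℕ))]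
        rw [clampF_val, clampF_val, hG, hG]
      calc ∑ i : Fin k, |intervalMass q (b i.castSucc) (b i.succ)
            - intervalMass (unif n) (b i.castSucc) (b i.succ)|
          = ∑ i : Fin k, |∑ l ∈ Finset.Ico ((G i.castSucc : ℕ)) ((G i.succ : ℕ)),
              ∑ j ∈ Finset.Ico (clampF r c l) (clampF r c (l+1)), (Qf q j - Qf (unif n) j)| :=
            Finset.sum_congr rfl fun i _ => e1 i
        _ ≤ ∑ i : Fin k, ∑ l ∈ Finset.Ico ((G i.castSucc : ℕ)) ((G i.succ : ℕ)),
              |∑ j ∈ Finset.Ico (clampF r c l) (clampF r c (l+1)), (Qf q j - Qf (unif n) j)| :=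
            Finset.sum_le_sum fun i _ => Finset.abs_sum_le_sum_abs _ _
        _ = ∑ i ∈ Finset.range k, (fun u v => ∑ l ∈ Finset.Ico u v,
              |∑ j ∈ Finset.Ico (clampF r c l) (clampF r c (l+1)), (Qf q j - Qf (unif n) j)|)
              (clampF k (fun i' => (G i' : ℕ)) i) (clampF k (fun i' => (G i' : ℕ)) (i+1)) :=
            fin_sum_to_range (fun i' => (G i' : ℕ)) (fun u v => ∑ l ∈ Finset.Ico u v,
              |∑ j ∈ Finset.Ico (clampF r c l) (clampF r c (l+1)), (Qf q j - Qf (unif n) j)|)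
        _ = ∑ l ∈ Finset.Ico (clampF k (fun i' => (G i' : ℕ)) 0) (clampF k (fun i' => (G i' : ℕ)) k),
              |∑ j ∈ Finset.Ico (clampF r c l) (clampF r c (l+1)), (Qf q j - Qf (unif n) j)| := by
            rw [Finset.range_eq_Ico]
            exact sum_Ico_Ico _ (clampF_mono hGvmono) (Nat.zero_le k)
        _ = ∑ l ∈ Finset.range r,
              |∑ j ∈ Finset.Ico (clampF r c l) (clampF r c (l+1)), (Qf q j - Qf (unif n) j)| := by
            rw [clampF_zero, clampF_top, hG0, hGlast, Fin.val_zero, Fin.val_last,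
              Finset.range_eq_Ico]
        _ = ∑ l : Fin r, |∑ j ∈ Finset.Ico (c l.castSucc) (c l.succ), (Qf q j - Qf (unif n) j)| := by
            rw [← Fin.sum_univ_eq_sum_range (fun l => |∑ j ∈ Finset.Ico (clampF r c l)
              (clampF r c (l+1)), (Qf q j - Qf (unif n) j)|) r]
            exact Finset.sum_congr rfl fun l _ => by rw [clampF_castSucc, clampF_succ]
    -- `ssTerm` in terms of the `Ico` sums
    have hss : ∀ l : Fin r, ssTerm q (c l.castSucc) (c l.succ)
        = |∑ j ∈ Finset.Ico (c l.castSucc) (c l.succ), (Qf q j - Qf (unif n) j)| ^ 2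
          / (((c l.succ - c l.castSucc : ℕ) : ℝ) / n) ^ ((1:ℝ)/8) := by
      intro l
      unfold ssTerm
      rw [← habs, intervalMass_unif (hcub l.succ)]
    -- Cauchy-Schwarz
    have hCS : (∑ l : Fin r, |∑ j ∈ Finset.Ico (c l.castSucc) (c l.succ),
          (Qf q j - Qf (unif n) j)|) ^ 2
        ≤ (∑ l : Fin r, ssTerm q (c l.castSucc) (c l.succ))
          * (∑ l : Fin r, (((c l.succ - c l.castSucc : ℕ) : ℝ) / n) ^ ((1:ℝ)/8)) := by
      have h1 := Finset.sum_mul_sq_le_sq_mul_sq Finset.univ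
        (fun l : Fin r => |∑ j ∈ Finset.Ico (c l.castSucc) (c l.succ), (Qf q j - Qf (unif n) j)|
          / ((((c l.succ - c l.castSucc : ℕ) : ℝ) / n) ^ ((1:ℝ)/16)))
        (fun l : Fin r => (((c l.succ - c l.castSucc : ℕ) : ℝ) / n) ^ ((1:ℝ)/16))
      have e16 : ∀ l : Fin r, ((((c l.succ - c l.castSucc : ℕ) : ℝ) / n) ^ ((1:ℝ)/16)) ^ 2
          = (((c l.succ - c l.castSucc : ℕ) : ℝ) / n) ^ ((1:ℝ)/8) := by
        intro l
        rw [← Real.rpow_natCast ((((c l.succ - c l.castSucc : ℕ) : ℝ) / n) ^ ((1:ℝ)/16)) 2,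
          ← Real.rpow_mul (hWpos l).le]
        norm_num
      have e1 : ∀ l : Fin r, |∑ j ∈ Finset.Ico (c l.castSucc) (c l.succ), (Qf q j - Qf (unif n) j)|
            / ((((c l.succ - c l.castSucc : ℕ) : ℝ) / n) ^ ((1:ℝ)/16))
            * ((((c l.succ - c l.castSucc : ℕ) : ℝ) / n) ^ ((1:ℝ)/16))
          = |∑ j ∈ Finset.Ico (c l.castSucc) (c l.succ), (Qf q j - Qf (unif n) j)| :=
        fun l => div_mul_cancel₀ _ (ne_of_gt (Real.rpow_pos_of_pos (hWpos l) _))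
      have e2 : ∀ l : Fin r, (|∑ j ∈ Finset.Ico (c l.castSucc) (c l.succ),
            (Qf q j - Qf (unif n) j)|
            / ((((c l.succ - c l.castSucc : ℕ) : ℝ) / n) ^ ((1:ℝ)/16))) ^ 2
          = ssTerm q (c l.castSucc) (c l.succ) := by
        intro l
        rw [div_pow, e16, hss]
      calc (∑ l : Fin r, |∑ j ∈ Finset.Ico (c l.castSucc) (c l.succ),
            (Qf q j - Qf (unif n) j)|) ^ 2
          = (∑ l : Fin r, |∑ j ∈ Finset.Ico (c l.castSucc) (c l.succ), (Qf q j - Qf (unif n) j)|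
              / ((((c l.succ - c l.castSucc : ℕ) : ℝ) / n) ^ ((1:ℝ)/16))
              * ((((c l.succ - c l.castSucc : ℕ) : ℝ) / n) ^ ((1:ℝ)/16))) ^ 2 := by
            rw [Finset.sum_congr rfl fun l _ => e1 l]
        _ ≤ (∑ l : Fin r, (|∑ j ∈ Finset.Ico (c l.castSucc) (c l.succ), (Qf q j - Qf (unif n) j)|
              / ((((c l.succ - c l.castSucc : ℕ) : ℝ) / n) ^ ((1:ℝ)/16))) ^ 2)
            * (∑ l : Fin r, ((((c l.succ - c l.castSucc : ℕ) : ℝ) / n) ^ ((1:ℝ)/16)) ^ 2) := h1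
        _ = (∑ l : Fin r, ssTerm q (c l.castSucc) (c l.succ))
            * (∑ l : Fin r, (((c l.succ - c l.castSucc : ℕ) : ℝ) / n) ^ ((1:ℝ)/8)) := by
            rw [Finset.sum_congr rfl fun l _ => e2 l, Finset.sum_congr rfl fun l _ => e16 l]
    -- the sum of `w^{1/8}` is at most `(2k)^{7/8}`
    have hr2k : ((r:ℝ)) ≤ 2 * (k:ℝ) := by
      have h1 : r ≤ 2 * k := by omega
      exact_mod_cast h1
    have hsumW : ∑ l : Fin r, ((c l.succ - c l.castSucc : ℕ) : ℝ) / n = 1 :=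
      sum_width hn hcmono.monotone hc0 hclast
    have hstep : ∀ p p2 : ℝ, p * 2 = p2 →
        (∑ l : Fin r, (((c l.succ - c l.castSucc : ℕ) : ℝ) / n) ^ p) ^ 2
          ≤ (r:ℝ) * ∑ l : Fin r, (((c l.succ - c l.castSucc : ℕ) : ℝ) / n) ^ p2 := by
      intro p p2 hp
      have e : ∀ l : Fin r, ((((c l.succ - c l.castSucc : ℕ) : ℝ) / n) ^ p) ^ 2
          = (((c l.succ - c l.castSucc : ℕ) : ℝ) / n) ^ p2 := by
        intro l
        rw [← Real.rpow_natCast ((((c l.succ - c l.castSucc : ℕ) : ℝ) / n) ^ p) 2,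
          ← Real.rpow_mul (hWpos l).le]
        congr 1
      calc (∑ l : Fin r, (((c l.succ - c l.castSucc : ℕ) : ℝ) / n) ^ p) ^ 2
          ≤ ((Finset.univ : Finset (Fin r)).card : ℝ)
              * ∑ l : Fin r, ((((c l.succ - c l.castSucc : ℕ) : ℝ) / n) ^ p) ^ 2 :=
            sq_sum_le_card_mul_sum_sq
        _ = (r:ℝ) * ∑ l : Fin r, (((c l.succ - c l.castSucc : ℕ) : ℝ) / n) ^ p2 := by
            rw [Finset.card_univ, Fintype.card_fin, Finset.sum_congr rfl fun l _ => e l]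
    have hBle : (∑ l : Fin r, (((c l.succ - c l.castSucc : ℕ) : ℝ) / n) ^ ((1:ℝ)/8))
        ≤ (2 * (k : ℝ)) ^ ((7 : ℝ) / 8) := by
      have h18 := hstep ((1:ℝ)/8) ((1:ℝ)/4) (by norm_num)
      have h14 := hstep ((1:ℝ)/4) ((1:ℝ)/2) (by norm_num)
      have h12 := hstep ((1:ℝ)/2) 1 (by norm_num)
      have hsum1 : ∑ l : Fin r, (((c l.succ - c l.castSucc : ℕ) : ℝ) / n) ^ (1:ℝ) = 1 := by
        rw [Finset.sum_congr rfl fun l _ => Real.rpow_one _]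
        exact hsumW
      rw [hsum1, mul_one] at h12
      set B1 := ∑ l : Fin r, (((c l.succ - c l.castSucc : ℕ) : ℝ) / n) ^ ((1:ℝ)/8) with hB1
      set B2 := ∑ l : Fin r, (((c l.succ - c l.castSucc : ℕ) : ℝ) / n) ^ ((1:ℝ)/4) with hB2
      set B3 := ∑ l : Fin r, (((c l.succ - c l.castSucc : ℕ) : ℝ) / n) ^ ((1:ℝ)/2) with hB3
      have hB1n : 0 ≤ B1 := Finset.sum_nonneg fun l _ => Real.rpow_nonneg (hWpos l).le _
      have hB2n : 0 ≤ B2 := Finset.sum_nonneg fun l _ => Real.rpow_nonneg (hWpos l).le _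
      have hB3n : 0 ≤ B3 := Finset.sum_nonneg fun l _ => Real.rpow_nonneg (hWpos l).le _
      have hrn : (0:ℝ) ≤ (r:ℝ) := Nat.cast_nonneg r
      have h8 : B1 ^ 8 ≤ (r:ℝ) ^ 7 := by
        calc B1 ^ 8 = ((B1 ^ 2) ^ 2) ^ 2 := by ring
          _ ≤ (((r:ℝ) * B2) ^ 2) ^ 2 :=
              pow_le_pow_left₀ (by positivity) (pow_le_pow_left₀ (by positivity) h18 2) 2
          _ = (r:ℝ) ^ 4 * (B2 ^ 2) ^ 2 := by ring
          _ ≤ (r:ℝ) ^ 4 * ((r:ℝ) * B3) ^ 2 :=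
              mul_le_mul_of_nonneg_left (pow_le_pow_left₀ (by positivity) h14 2) (by positivity)
          _ = (r:ℝ) ^ 6 * B3 ^ 2 := by ring
          _ ≤ (r:ℝ) ^ 6 * (r:ℝ) := mul_le_mul_of_nonneg_left h12 (by positivity)
          _ = (r:ℝ) ^ 7 := by ring
      have h7 : (r:ℝ) ^ 7 ≤ (2 * (k:ℝ)) ^ 7 := pow_le_pow_left₀ hrn hr2k 7
      refine le_of_pow_le_pow_left₀ (by norm_num) hC.le (n := 8) ?_
      have hC8 : ((2 * (k : ℝ)) ^ ((7 : ℝ) / 8)) ^ (8:ℕ) = (2 * (k:ℝ)) ^ (7:ℕ) := by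
        rw [← Real.rpow_natCast ((2 * (k : ℝ)) ^ ((7 : ℝ) / 8)) 8,
          ← Real.rpow_mul (by positivity), ← Real.rpow_natCast (2 * (k:ℝ)) 7]
        norm_num
      rw [hC8]
      exact le_trans h8 h7
    -- membership of the refined sum in the `ssDistSq` set
    have hyT : (∑ l : Fin r, ssTerm q (c l.castSucc) (c l.succ)) ≤ ssDistSq n k q := by
      unfold ssDistSq
      exact le_csSup hBdd ⟨r, c, hcmono, hc0, hclast, hWk, rfl⟩
    have hy0 : (0:ℝ) ≤ ∑ l : Fin r, ssTerm q (c l.castSucc) (c l.succ) :=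
      Finset.sum_nonneg fun l _ => by unfold ssTerm; positivity
    have hx0 : (0:ℝ) ≤ ∑ i : Fin k, |intervalMass q (b i.castSucc) (b i.succ)
        - intervalMass (unif n) (b i.castSucc) (b i.succ)| :=
      Finset.sum_nonneg fun i _ => abs_nonneg _
    refine Real.le_sqrt_of_sq_le ?_
    calc (∑ i : Fin k, |intervalMass q (b i.castSucc) (b i.succ)
          - intervalMass (unif n) (b i.castSucc) (b i.succ)|) ^ 2
        ≤ (∑ l : Fin r, |∑ j ∈ Finset.Ico (c l.castSucc) (c l.succ),
            (Qf q j - Qf (unif n) j)|) ^ 2 := pow_le_pow_left₀ hx0 step1 2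
      _ ≤ (∑ l : Fin r, ssTerm q (c l.castSucc) (c l.succ))
          * (∑ l : Fin r, (((c l.succ - c l.castSucc : ℕ) : ℝ) / n) ^ ((1:ℝ)/8)) := hCS
      _ ≤ (∑ l : Fin r, ssTerm q (c l.castSucc) (c l.succ))
          * (2 * (k : ℝ)) ^ ((7 : ℝ) / 8) := mul_le_mul_of_nonneg_left hBle hy0
      _ ≤ ssDistSq n k q * (2 * (k : ℝ)) ^ ((7 : ℝ) / 8) :=
          mul_le_mul_of_nonneg_right hyT hC.le
      _ = (2 * (k : ℝ)) ^ ((7 : ℝ) / 8) * ssDistSq n k q := mul_comm _ _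
  -- conclude
  have hA : AkDist n k q (unif n)
      ≤ Real.sqrt ((2 * (k : ℝ)) ^ ((7 : ℝ) / 8) * ssDistSq n k q) := by
    unfold AkDist
    exact Real.sSup_le key (Real.sqrt_nonneg _)
  have hA0 : 0 ≤ AkDist n k q (unif n) := by
    unfold AkDist
    refine Real.sSup_nonneg fun x hx => ?_
    obtain ⟨b, -, -, -, rfl⟩ := hx
    exact Finset.sum_nonneg fun i _ => abs_nonneg _
  have hT0 : 0 ≤ ssDistSq n k q := by
    unfold ssDistSq
    refine Real.sSup_nonneg fun x hx => ?_
    obtain ⟨r, c, -, -, -, -, rfl⟩ := hx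
    exact Finset.sum_nonneg fun l _ => by unfold ssTerm; positivity
  rw [div_le_iff₀ hC]
  calc AkDist n k q (unif n) ^ 2
      ≤ Real.sqrt ((2 * (k : ℝ)) ^ ((7 : ℝ) / 8) * ssDistSq n k q) ^ 2 :=
        pow_le_pow_left₀ hA0 hA 2
    _ = (2 * (k : ℝ)) ^ ((7 : ℝ) / 8) * ssDistSq n k q := Real.sq_sqrt (by positivity)
    _ = ssDistSq n k q * (2 * (k : ℝ)) ^ ((7 : ℝ) / 8) := mul_comm _ _
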